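/- arXiv:2103.05836 — 3 statements merged into one kernel-verified Lean document; each statement's English description precedes it below -/
import Mathlib

section
/- p-th power rule: let F be a commutative ring of prime characteristic p. For f ∈ F[θ], n ≥ 0, and j ≥ 1: if j = k·p^n for some integer k then ∂_θ^j(f^{p^n}) = (∂_θ^k(f))^{p^n}, and if p^n does not divide j then ∂_θ^j(f^{p^n}) = 0. -/
open Polynomial

private lemma hasseDeriv_map' {R S : Type*} [CommRing R] [CommRing S] (φ : R →+* S) (k : ℕ)
    (f : R[X]) : hasseDeriv k (f.map φ) = (hasseDeriv k f).map φ := by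
  ext n
  simp [hasseDeriv_coeff, coeff_map]

private lemma lucas_cast_zero {F : Type*} [CommRing F] (p : ℕ) [Fact p.Prime] [CharP F p]
    {m j : ℕ} (hm : p ∣ m) (hj : ¬ p ∣ j) : ((m.choose j : ℕ) : F) = 0 := by
  rw [CharP.cast_eq_zero_iff F p]
  have h := (Choose.choose_modEq_choose_mod_mul_choose_div_nat (p := p) (n := m) (k := j))
  have hm0 : m % p = 0 := Nat.dvd_iff_mod_eq_zero.mp hm
  have hj0 : 0 < j % p := Nat.pos_of_ne_zero fun h0 => hj (Nat.dvd_iff_mod_eq_zero.mpr h0)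
  rw [hm0, Nat.choose_eq_zero_of_lt hj0, Nat.zero_mul] at h
  exact (Nat.modEq_zero_iff_dvd).mp h

private lemma lucas_cast_mul {F : Type*} [CommRing F] (p : ℕ) [Fact p.Prime] [CharP F p]
    (a k : ℕ) : (((a * p).choose (k * p) : ℕ) : F) = ((a.choose k : ℕ) : F) := by
  apply CharP.natCast_eq_natCast' F p
  have h := (Choose.choose_modEq_choose_mod_mul_choose_div_nat (p := p) (n := a * p) (k := k * p))
  have hp : 0 < p := (Fact.out (p := p.Prime)).pos
  simpa [Nat.mul_mod_left, Nat.mul_div_cancel _ hp] using h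

private lemma hasseDeriv_expand_not_dvd {F : Type*} [CommRing F] (p : ℕ) [Fact p.Prime]
    [CharP F p] (f : F[X]) {j : ℕ} (hj : ¬ p ∣ j) :
    hasseDeriv j (expand F p f) = 0 := by
  have hp : 0 < p := (Fact.out (p := p.Prime)).pos
  ext m
  rw [hasseDeriv_coeff, coeff_expand hp, coeff_zero]
  split_ifs with h
  · rw [lucas_cast_zero p h hj, zero_mul]
  · rw [mul_zero]

private lemma hasseDeriv_expand_mul {F : Type*} [CommRing F] (p : ℕ) [Fact p.Prime]
    [CharP F p] (f : F[X]) (k : ℕ) :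
    hasseDeriv (k * p) (expand F p f) = expand F p (hasseDeriv k f) := by
  have hp : 0 < p := (Fact.out (p := p.Prime)).pos
  ext m
  rw [hasseDeriv_coeff, coeff_expand hp, coeff_expand hp]
  by_cases h : p ∣ m
  · obtain ⟨a, rfl⟩ := h
    have h2 : p ∣ p * a + k * p := ⟨a + k, by ring⟩
    rw [if_pos h2, if_pos ⟨a, rfl⟩]
    have e1 : p * a + k * p = (a + k) * p := by ring
    have e2 : (p * a + k * p) / p = a + k := by rw [e1, Nat.mul_div_cancel _ hp]
    have e3 : p * a / p = a := by rw [Nat.mul_div_cancel_left _ hp]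
    rw [e2, e1, e3, lucas_cast_mul, hasseDeriv_coeff]
  · have hndvd : ¬ p ∣ m + k * p := fun hc =>
      h (by simpa using (Nat.dvd_sub hc ⟨k, mul_comm k p⟩))
    rw [if_neg h, if_neg hndvd, mul_zero]

private lemma hasseDeriv_pow_p {F : Type*} [CommRing F] (p : ℕ) [Fact p.Prime] [CharP F p]
    (f : F[X]) :
    (∀ k j : ℕ, j = k * p → hasseDeriv j (f ^ p) = hasseDeriv k f ^ p) ∧
    (∀ j : ℕ, ¬ p ∣ j → hasseDeriv j (f ^ p) = 0) := by
  have hfp : f ^ p = (expand F p f).map (frobenius F p) := (map_frobenius_expand p f).symm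
  constructor
  · rintro k j rfl
    rw [hfp, hasseDeriv_map', hasseDeriv_expand_mul]
    exact map_frobenius_expand p _
  · intro j hj
    rw [hfp, hasseDeriv_map', hasseDeriv_expand_not_dvd p f hj, Polynomial.map_zero]

/-- The `p`-th power rule for hyperderivatives in characteristic `p`. -/
theorem hasseDeriv_p_power_rule {F : Type*} [CommRing F] (p : ℕ) [Fact p.Prime] [CharP F p]
    (f : Polynomial F) (n j : ℕ) (hj : 1 ≤ j) :
    (∀ k : ℕ, j = k * p ^ n →
        Polynomial.hasseDeriv j (f ^ p ^ n) = Polynomial.hasseDeriv k f ^ p ^ n) ∧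
    (¬ p ^ n ∣ j → Polynomial.hasseDeriv j (f ^ p ^ n) = 0) := by
  have hp : 0 < p := (Fact.out (p := p.Prime)).pos
  induction n generalizing j hj with
  | zero =>
    constructor
    · rintro k rfl
      rw [pow_zero, mul_one, pow_one, pow_one]
    · intro h
      exact absurd (by rw [pow_zero]; exact one_dvd j) h
  | succ n ih =>
    constructor
    · rintro k rfl
      have hk : 1 ≤ k := by
        rcases Nat.eq_zero_or_pos k with rfl | h
        · simp at hj
        · exact h
      have h1 : 1 ≤ k * p ^ n := Nat.one_le_iff_ne_zero.mpr (by positivity)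
      rw [pow_succ, pow_mul, show k * (p ^ n * p) = (k * p ^ n) * p from by ring,
        (hasseDeriv_pow_p p (f ^ p ^ n)).1 (k * p ^ n) _ rfl,
        (ih (k * p ^ n) h1).1 k rfl, ← pow_mul]
    · intro hnd
      rw [pow_succ, pow_mul]
      by_cases hp1 : p ∣ j
      · obtain ⟨m, rfl⟩ := hp1
        have hm1 : 1 ≤ m := by
          rcases Nat.eq_zero_or_pos m with rfl | h
          · simp at hj
          · exact h
        have hmnd : ¬ p ^ n ∣ m := fun hc => hnd (by rw [pow_succ']; exact mul_dvd_mul_left p hc)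
        rw [(hasseDeriv_pow_p p (f ^ p ^ n)).1 m (p * m) (mul_comm p m),
          (ih m hm1).2 hmnd, zero_pow hp.ne']
      · exact (hasseDeriv_pow_p p (f ^ p ^ n)).2 j hp1
end

section
/- Chain rule specialization (a): let F be a field and f ∈ F[θ][t] a polynomial in two variables θ, t. Then for all j ≥ 0, ∂_θ^j(f)|_{t=θ} = Σ_{i=0}^{j} (-1)^i · ∂_θ^{j-i}( ∂_t^i(f)|_{t=θ} ), where ∂_θ and ∂_t denote partial hyperderivatives with respect to θ and t, and |_{t=θ} means substituting t = θ. -/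
open Polynomial Finset

lemma key_comb {R : Type*} [CommRing R] (b : ℕ) : ∀ c j : ℕ,
    ∑ i ∈ Finset.range (j + 1),
      (-1 : R) ^ i * (b.choose i) * ((c + b - i).choose (j - i)) = c.choose j := by
  induction b with
  | zero =>
    intro c j
    rw [Finset.sum_eq_single 0]
    · simp
    · intro i _ hne
      rw [Nat.choose_eq_zero_of_lt (Nat.pos_of_ne_zero hne)]
      simp
    · simp
  | succ b ih =>
    intro c j
    cases j with
    | zero => simp
    | succ j =>
      have h1 := ih (c + 1) (j + 1)
      have h2 := ih c j
      rw [Finset.sum_range_succ'] at h1 ⊢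
      have e1 : ∀ i : ℕ, c + 1 + b - (i + 1) = c + b - i := by omega
      have e2 : ∀ i : ℕ, c + (b + 1) - (i + 1) = c + b - i := by omega
      have e3 : c + (b + 1) = c + 1 + b := by omega
      simp only [e1, e2, e3, Nat.succ_sub_succ, Nat.sub_zero] at h1 ⊢
      have split : ∀ i ∈ Finset.range (j + 1),
          (-1 : R) ^ (i + 1) * ((b + 1).choose (i + 1)) * ((c + b - i).choose (j - i))
            = -((-1 : R) ^ i * (b.choose i) * ((c + b - i).choose (j - i)))
              + -((-1 : R) ^ i * (b.choose (i + 1)) * ((c + b - i).choose (j - i))) := by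
        intro i _
        rw [Nat.choose_succ_succ]
        push_cast
        ring
      rw [Finset.sum_congr rfl split, Finset.sum_add_distrib] at *
      have split1 : ∀ i ∈ Finset.range (j + 1),
          (-1 : R) ^ (i + 1) * (b.choose (i + 1)) * ((c + b - i).choose (j - i))
            = -((-1 : R) ^ i * (b.choose (i + 1)) * ((c + b - i).choose (j - i))) := by
        intro i _
        ring
      rw [Finset.sum_congr rfl split1] at h1
      have pascal : ((c + 1).choose (j + 1) : R) = c.choose j + c.choose (j + 1) := by
        rw [Nat.choose_succ_succ]; push_cast; ring
      simp only [Finset.sum_neg_distrib, Nat.choose_zero_right, Nat.cast_one] at h1 ⊢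
      linear_combination h1 - h2 + pascal

open Polynomial Finset

noncomputable def thetaHasse {F : Type*} [CommRing F] (j : ℕ)
    (f : Polynomial (Polynomial F)) : Polynomial (Polynomial F) :=
  f.sum fun n a => Polynomial.C (Polynomial.hasseDeriv j a) * Polynomial.X ^ n

lemma eval_thetaHasse_add {F : Type*} [CommRing F] (j : ℕ) (p q : Polynomial (Polynomial F)) :
    Polynomial.eval Polynomial.X (thetaHasse j (p + q))
      = Polynomial.eval Polynomial.X (thetaHasse j p)
        + Polynomial.eval Polynomial.X (thetaHasse j q) := by
  unfold thetaHasse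
  rw [Polynomial.sum_add_index p q _ (by simp) (by intro a b₁ b₂; rw [map_add, map_add, add_mul]),
    Polynomial.eval_add]

lemma mono_case {F : Type*} [CommRing F] (b c j : ℕ) (r : F) :
    Polynomial.eval Polynomial.X (thetaHasse j (Polynomial.monomial b (Polynomial.monomial c r)))
      = ∑ i ∈ Finset.range (j + 1),
          (-1 : Polynomial F) ^ i
            * Polynomial.hasseDeriv (j - i)
                (Polynomial.eval Polynomial.X
                  (Polynomial.hasseDeriv i (Polynomial.monomial b (Polynomial.monomial c r)))) := by
  have term_eq : ∀ i ∈ Finset.range (j + 1),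
      (-1 : Polynomial F) ^ i
          * Polynomial.hasseDeriv (j - i)
              (Polynomial.eval Polynomial.X
                (Polynomial.hasseDeriv i (Polynomial.monomial b (Polynomial.monomial c r))))
        = Polynomial.monomial (c + b - j)
            (((-1 : F) ^ i * (b.choose i) * ((c + b - i).choose (j - i))) * r) := by
    intro i hi
    simp only [Finset.mem_range, Nat.lt_succ_iff] at hi
    rw [Polynomial.hasseDeriv_monomial, Polynomial.eval_monomial, ← Polynomial.C_eq_natCast,
      Polynomial.C_mul_monomial, Polynomial.X_pow_eq_monomial, Polynomial.monomial_mul_monomial,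
      mul_one, Polynomial.hasseDeriv_monomial,
      show ((-1 : Polynomial F)) ^ i = Polynomial.C ((-1 : F) ^ i) by simp,
      Polynomial.C_mul_monomial]
    by_cases hib : i ≤ b
    · by_cases hjcb : j ≤ c + b
      · have e4 : c + (b - i) = c + b - i := by omega
        rw [e4]
        have e5 : c + b - i - (j - i) = c + b - j := by omega
        rw [e5]
        congr 1
        ring
      · have h0 : (c + (b - i)).choose (j - i) = Nat.choose 0 1 := by
          rw [Nat.choose_eq_zero_of_lt (by omega), Nat.choose_eq_zero_of_lt (by omega)]
        have h0' : (c + b - i).choose (j - i) = Nat.choose 0 1 := by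
          rw [Nat.choose_eq_zero_of_lt (by omega), Nat.choose_eq_zero_of_lt (by omega)]
        simp [h0, h0']
    · have h0 : b.choose i = 0 := Nat.choose_eq_zero_of_lt (by omega)
      simp [h0]
  rw [Finset.sum_congr rfl term_eq, ← map_sum]
  have inner : ∑ i ∈ Finset.range (j + 1),
      ((-1 : F) ^ i * (b.choose i) * ((c + b - i).choose (j - i))) * r
        = (c.choose j : F) * r := by
    rw [← Finset.sum_mul, key_comb]
  rw [inner]
  -- LHS side
  rw [show thetaHasse j (Polynomial.monomial b (Polynomial.monomial c r))
        = Polynomial.C (Polynomial.hasseDeriv j (Polynomial.monomial c r)) * Polynomial.X ^ b from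
      Polynomial.sum_monomial_index _ _ (by simp)]
  rw [Polynomial.eval_mul, Polynomial.eval_C, Polynomial.eval_pow, Polynomial.eval_X,
    Polynomial.hasseDeriv_monomial, Polynomial.X_pow_eq_monomial,
    Polynomial.monomial_mul_monomial, mul_one]
  by_cases hjc : j ≤ c
  · have : c - j + b = c + b - j := by omega
    rw [this]
  · rw [Nat.choose_eq_zero_of_lt (show c < j by omega)]
    simp


/-- Chain rule specialization (a):
`∂_θ^j(f)|_{t=θ} = Σ_{i=0}^{j} (-1)^i ∂_θ^{j-i}( ∂_t^i(f)|_{t=θ} )`. -/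
theorem chain_rule_specialization_a {F : Type*} [Field F]
    (f : Polynomial (Polynomial F)) (j : ℕ) :
    Polynomial.eval Polynomial.X (thetaHasse j f)
      = ∑ i ∈ Finset.range (j + 1),
          (-1 : Polynomial F) ^ i
            * Polynomial.hasseDeriv (j - i)
                (Polynomial.eval Polynomial.X (Polynomial.hasseDeriv i f)) := by
  induction f using Polynomial.induction_on' with
  | add p q hp hq =>
    rw [eval_thetaHasse_add, hp, hq, ← Finset.sum_add_distrib]
    refine Finset.sum_congr rfl fun i _ => ?_
    rw [map_add, Polynomial.eval_add, map_add, mul_add]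
  | monomial n a =>
    induction a using Polynomial.induction_on' with
    | add p q hp hq =>
      rw [map_add, eval_thetaHasse_add, hp, hq, ← Finset.sum_add_distrib]
      refine Finset.sum_congr rfl fun i _ => ?_
      simp only [map_add, Polynomial.eval_add, mul_add]
    | monomial c r =>
      exact mono_case n c j r
end

section
/- Functional equation for Anderson generating functions of a Drinfeld module: let K be the completion of an algebraic closure of F_q((1/θ)), let φ_t = θ + b_1τ + ⋯ + b_rτ^r define a Drinfeld module with exponential exp_φ : K → K satisfying exp_φ(θz) = φ_t(exp_φ(z)), and for y ∈ K let G_y = Σ_{n≥0} exp_φ(y/θ^{n+1}) t^n ∈ T (the Tate algebra of the closed unit disk). Then θ·G_y + b_1·G_y^{(1)} + ⋯ + b_r·G_y^{(r)} = t·G_y + exp_φ(y), where G^{(i)} denotes Frobenius twisting of coefficients by q^i. -/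
/-- Functional equation for the Anderson generating function of a Drinfeld module:
with `G_y = Σ_n exp_φ(y/θ^{n+1}) tⁿ`, one has
`θ G_y + b₁ G_y^{(1)} + ⋯ + b_r G_y^{(r)} = t G_y + exp_φ(y)`. -/
theorem agf_functional_equation {K : Type*} [NormedField K] [CompleteSpace K]
    [IsUltrametricDist K] (p : ℕ) [Fact p.Prime] [CharP K p] (e : ℕ) (he : 0 < e)
    (θ : K) (hθ : 1 < ‖θ‖) (r : ℕ) (b : Fin r → K) (expφ : K → K)
    (hexp : ∀ z : K, expφ (θ * z)
      = θ * expφ z + ∑ i : Fin r, b i * expφ z ^ (p ^ e) ^ ((i : ℕ) + 1))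
    (y : K) :
    let G : PowerSeries K := PowerSeries.mk fun n => expφ (y / θ ^ (n + 1))
    let tw : ℕ → PowerSeries K → PowerSeries K := fun i f =>
      PowerSeries.mk fun n => PowerSeries.coeff n f ^ (p ^ e) ^ i
    PowerSeries.C θ * G + ∑ i : Fin r, PowerSeries.C (b i) * tw ((i : ℕ) + 1) G
      = PowerSeries.X * G + PowerSeries.C (expφ y) := by
  intro G tw
  have hθ0 : θ ≠ 0 := by
    intro h; rw [h, norm_zero] at hθ; linarith
  ext n
  have key : ∀ n : ℕ, θ * expφ (y / θ ^ (n + 1))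
      + ∑ i : Fin r, b i * expφ (y / θ ^ (n + 1)) ^ (p ^ e) ^ ((i : ℕ) + 1)
      = expφ (y / θ ^ n) := by
    intro n
    rw [← hexp]
    congr 1
    field_simp
    ring
  simp only [map_add, map_sum, PowerSeries.coeff_C_mul, G, tw, PowerSeries.coeff_mk]
  cases n with
  | zero =>
    simp only [PowerSeries.coeff_zero_X_mul, PowerSeries.coeff_zero_C, zero_add]
    simpa using key 0
  | succ n =>
    rw [PowerSeries.coeff_succ_X_mul]
    simp only [PowerSeries.coeff_C, Nat.succ_ne_zero, if_false, add_zero,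
      PowerSeries.coeff_mk]
    exact key (n + 1)
end
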